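/- Let f : [0,T] × ℝⁿ → ℝⁿ be C¹ with f and D_q f continuous and globally Lipschitz in q, let g : [0,T] × ℝⁿ → ℝ be C¹, and let p₁ : ℝⁿ → ℝⁿ be continuous. Then the free boundary problem q̇ = f(t,q), ṗ = −[D_q f(t,q)]ᵀ p − ∇_q g(t,q), q(0) = q₀, p(T) = p₁(q(T)) has a unique C¹ solution (q,p) : [0,T] → ℝⁿ × ℝⁿ. -/

import Mathlib

open Set

variable {E : Type*} [NormedAddCommGroup E] [NormedSpace ℝ E] [CompleteSpace E]

lemma fb_aux_exists (v : ℝ → E → E) (hv : Continuous fun x : ℝ × E => v x.1 x.2)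
    (K : NNReal) (hl : ∀ t, LipschitzWith K (v t)) (a b : ℝ) (hab : a ≤ b) (x₀ : E) :
    ∃ α : ℝ → E, α a = x₀ ∧ ∀ t ∈ Icc a b, HasDerivWithinAt α (v t (α t)) (Icc a b) t := by
  classical
  set h : ℝ := 1 / (2 * (K + 1)) with hh
  have hK1 : (0:ℝ) < 2 * (K + 1) := by positivity
  have hhpos : 0 < h := by positivity
  have hKnn : (0:ℝ) ≤ K := K.coe_nonneg
  have hKh : (K:ℝ) * h ≤ 1 / 2 := by
    rw [hh, mul_one_div, div_le_div_iff₀ hK1 (by norm_num)]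
    nlinarith
  have key : ∀ k : ℕ, ∃ α : ℝ → E, α a = x₀ ∧
      ∀ t ∈ Icc a (min (a + k * h) b),
        HasDerivWithinAt α (v t (α t)) (Icc a (min (a + k * h) b)) t := by
    intro k
    induction k with
    | zero =>
      refine ⟨fun _ => x₀, rfl, ?_⟩
      intro t ht
      simp only [Nat.cast_zero, zero_mul, add_zero, min_eq_left hab] at ht ⊢
      rw [Icc_self] at ht ⊢
      rw [mem_singleton_iff] at ht
      subst ht
      have hs : HasFDerivWithinAt (fun _ : ℝ => x₀)
          (ContinuousLinearMap.smulRight (1 : ℝ →L[ℝ] ℝ) (v t x₀)) {t} t := by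
        simp only [HasFDerivWithinAt, nhdsWithin_singleton,
          hasFDerivAtFilter_iff_isLittleO, Asymptotics.isLittleO_pure, sub_self]
        simp
      simpa using hs.hasDerivWithinAt
    | succ k ih =>
      obtain ⟨α, ha0, hα⟩ := ih
      by_cases hcb : b ≤ a + k * h
      · have h1 : min (a + k * h) b = b := min_eq_right hcb
        have h2 : min (a + (k + 1 : ℕ) * h) b = b := by
          apply min_eq_right; push_cast; nlinarith
        rw [h2]
        rw [h1] at hα
        exact ⟨α, ha0, hα⟩
      · push_neg at hcb
        set c := a + k * h with hc
        have h1 : min c b = c := min_eq_left hcb.le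
        rw [h1] at hα
        have hac : a ≤ c := by rw [hc]; nlinarith [Nat.cast_nonneg (α := ℝ) k]
        set c' := min (a + (k + 1 : ℕ) * h) b with hc'
        have hcc' : c ≤ c' := by
          apply le_min _ hcb.le
          push_cast; nlinarith
        have hc'h : c' ≤ c + h := by
          apply min_le_of_left_le
          push_cast; nlinarith
        -- local Picard-Lindelöf on [c, c']
        have hcα : Continuous fun t : ℝ => v t (α c) :=
          hv.comp (continuous_id.prodMk continuous_const)
        obtain ⟨M, hM⟩ := (isCompact_Icc (a := c) (b := c')).exists_bound_of_continuousOn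
          hcα.continuousOn
        have hM0 : 0 ≤ M := le_trans (norm_nonneg _) (hM c ⟨le_rfl, hcc'⟩)
        set R : ℝ := 2 * M * h with hR
        set C : ℝ := M + K * R with hC
        have hRnn : 0 ≤ R := by positivity
        have hCnn : 0 ≤ C := by positivity
        have hpl : IsPicardLindelof v (⟨c, left_mem_Icc.2 hcc'⟩ : Icc c c') (α c)
            (⟨R, hRnn⟩ : NNReal) 0 (⟨C, hCnn⟩ : NNReal) K :=
          { lipschitzOnWith := fun t _ => (hl t).lipschitzOnWith
            continuousOn := fun x _ =>
              (hv.comp (continuous_id.prodMk (continuous_const (y := x)))).continuousOn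
            norm_le := by
              intro t ht x hx
              have h3 : dist (v t x) (v t (α c)) ≤ K * dist x (α c) := (hl t).dist_le_mul _ _
              have h4 : dist x (α c) ≤ R := Metric.mem_closedBall.1 hx
              have h5 : ‖v t x‖ ≤ ‖v t (α c)‖ + dist (v t x) (v t (α c)) := by
                rw [← dist_zero_right, ← dist_zero_right]
                calc dist (v t x) 0 ≤ dist (v t x) (v t (α c)) + dist (v t (α c)) 0 :=
                      dist_triangle _ _ _
                  _ = dist (v t (α c)) 0 + dist (v t x) (v t (α c)) := by ring
              have h6 := hM t ht
              have hdnn : (0:ℝ) ≤ dist x (α c) := dist_nonneg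
              have h7 : (K:ℝ) * dist x (α c) ≤ K * R := by
                exact mul_le_mul_of_nonneg_left h4 hKnn
              show ‖v t x‖ ≤ C
              rw [hC]
              linarith
            mul_max_le := by
              simp only [NNReal.coe_mk, NNReal.coe_zero, sub_zero, tsub_zero]
              show C * max (c' - c) (c - c) ≤ R
              have hmax : max (c' - c) (c - c) = c' - c := by
                apply max_eq_left; linarith
              rw [hmax, hC, hR]
              have e1 : c' - c ≤ h := by linarith
              have e2 : (M + ↑K * (2 * M * h)) * (c' - c) ≤ (M + ↑K * (2 * M * h)) * h := by
                apply mul_le_mul_of_nonneg_left e1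
                rw [hC, hR] at hCnn
                exact hCnn
              have e3 : (↑K * h) * (M * h) ≤ (1/2) * (M * h) :=
                mul_le_mul_of_nonneg_right hKh (mul_nonneg hM0 hhpos.le)
              nlinarith }
        obtain ⟨β, hβ0', hβ⟩ := hpl.exists_eq_forall_mem_Icc_hasDerivWithinAt₀
        have hβ0 : β c = α c := hβ0'
        refine ⟨fun t => if t ≤ c then α t else β t, by simp [hac, ha0], ?_⟩
        intro t ht
        rcases lt_trichotomy t c with htc | heq | hct
        · -- t < c
          have hd1 : HasDerivWithinAt α (v t (α t)) (Icc a c) t := hα t ⟨ht.1, htc.le⟩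
          have h2 : Icc a c ∈ nhdsWithin t (Icc a c') := by
            refine mem_nhdsWithin.2 ⟨Iio c, isOpen_Iio, htc, ?_⟩
            rintro s ⟨hs1, hs2⟩
            exact ⟨hs2.1, hs1.le⟩
          have h3 := hd1.mono_of_mem_nhdsWithin h2
          have h4 : (fun s => if s ≤ c then α s else β s) =ᶠ[nhdsWithin t (Icc a c')] α :=
            Filter.eventuallyEq_of_mem (mem_nhdsWithin_of_mem_nhds (Iic_mem_nhds htc))
              (fun s hs => if_pos hs)
          have h5 := h3.congr_of_eventuallyEq h4 (if_pos htc.le)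
          simpa only [if_pos htc.le] using h5
        · -- t = c
          subst heq
          have hd1 : HasDerivWithinAt α (v c (α c)) (Icc a c) c := hα c ⟨hac, le_rfl⟩
          have hd1' : HasDerivWithinAt (fun s => if s ≤ c then α s else β s)
              (v c (α c)) (Icc a c) c :=
            hd1.congr (fun s hs => if_pos hs.2) (if_pos le_rfl)
          have hd2 : HasDerivWithinAt β (v c (β c)) (Icc c c') c := hβ c ⟨le_rfl, hcc'⟩
          rw [hβ0] at hd2
          have hd2' : HasDerivWithinAt (fun s => if s ≤ c then α s else β s)
              (v c (α c)) (Icc c c') c := by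
            refine hd2.congr ?_ ?_
            · intro s hs
              rcases eq_or_lt_of_le hs.1 with heq2 | hlt
              · rw [← heq2, if_pos le_rfl, hβ0]
              · rw [if_neg (not_le.2 hlt)]
            · rw [if_pos le_rfl, hβ0]
          have hu := hd1'.union hd2'
          rw [Icc_union_Icc_eq_Icc hac hcc'] at hu
          simpa only [if_pos le_rfl] using hu
        · -- c < t
          have hd1 : HasDerivWithinAt β (v t (β t)) (Icc c c') t := hβ t ⟨hct.le, ht.2⟩
          have h2 : Icc c c' ∈ nhdsWithin t (Icc a c') := by
            refine mem_nhdsWithin.2 ⟨Ioi c, isOpen_Ioi, hct, ?_⟩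
            rintro s ⟨hs1, hs2⟩
            exact ⟨hs1.le, hs2.2⟩
          have h3 := hd1.mono_of_mem_nhdsWithin h2
          have h4 : (fun s => if s ≤ c then α s else β s) =ᶠ[nhdsWithin t (Icc a c')] β :=
            Filter.eventuallyEq_of_mem (mem_nhdsWithin_of_mem_nhds (Ioi_mem_nhds hct))
              (fun s hs => if_neg (not_le.2 hs))
          have h5 := h3.congr_of_eventuallyEq h4 (if_neg (not_le.2 hct))
          simpa only [if_neg (not_le.2 hct)] using h5
  obtain ⟨k, hk⟩ := exists_nat_ge ((b - a) / h)
  obtain ⟨α, hα0, hα⟩ := key k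
  have hmin : min (a + k * h) b = b := by
    apply min_eq_right
    rw [div_le_iff₀ hhpos] at hk
    linarith
  rw [hmin] at hα
  exact ⟨α, hα0, hα⟩

lemma fb_aux_ext (α w : ℝ → E) (a b : ℝ) (hab : a < b)
    (hα : ∀ t ∈ Icc a b, HasDerivWithinAt α (w t) (Icc a b) t) :
    ∃ β : ℝ → E, EqOn β α (Icc a b) ∧ ∀ t ∈ Icc a b, HasDerivAt β (w t) t := by
  classical
  set β : ℝ → E := fun t =>
    if t < a then α a + (t - a) • w a else if b < t then α b + (t - b) • w b else α t with hβ
  have heq : EqOn β α (Icc a b) := by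
    intro t ht
    simp only [hβ, if_neg (not_lt.2 ht.1), if_neg (not_lt.2 ht.2)]
  refine ⟨β, heq, ?_⟩
  intro t ht
  rcases eq_or_lt_of_le ht.1 with hta | hat
  · -- t = a
    subst hta
    have hφ : HasDerivAt (fun s : ℝ => α a + (s - a) • w a) (w a) a := by
      simpa using (((hasDerivAt_id a).sub_const a).smul_const (w a)).const_add (α a)
    have hL : HasDerivWithinAt β (w a) (Iic a) a := by
      refine (hφ.hasDerivWithinAt).congr ?_ ?_
      · intro s hs
        rcases eq_or_lt_of_le (mem_Iic.1 hs) with rfl | hst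
        · rw [heq ⟨le_rfl, ht.2⟩]
          simp
        · simp only [hβ, if_pos hst]
      · rw [heq ⟨le_rfl, ht.2⟩]
        simp
    have hR : HasDerivWithinAt β (w a) (Ici a) a := by
      have h1 : HasDerivWithinAt α (w a) (Icc a b) a := hα a ⟨le_rfl, ht.2⟩
      have h2 : Icc a b ∈ nhdsWithin a (Ici a) := by
        refine mem_nhdsWithin.2 ⟨Iio b, isOpen_Iio, hab, ?_⟩
        rintro s ⟨hs1, hs2⟩
        exact ⟨hs2, hs1.le⟩
      exact ((h1.mono_of_mem_nhdsWithin h2).congr_of_eventuallyEq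
        (Filter.eventuallyEq_of_mem h2 (fun s hs => heq hs))
        (heq ⟨le_rfl, ht.2⟩))
    have := hL.union hR
    rw [Iic_union_Ici] at this
    exact this.hasDerivAt (by simp)
  · rcases eq_or_lt_of_le ht.2 with htb | htb
    · -- t = b
      subst htb
      have hφ : HasDerivAt (fun s : ℝ => α t + (s - t) • w t) (w t) t := by
        simpa using (((hasDerivAt_id t).sub_const t).smul_const (w t)).const_add (α t)
      have hR : HasDerivWithinAt β (w t) (Ici t) t := by
        refine (hφ.hasDerivWithinAt).congr ?_ ?_
        · intro s hs
          rcases eq_or_lt_of_le (mem_Ici.1 hs) with hst | hst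
          · rw [← hst, heq ⟨ht.1, le_rfl⟩]
            simp
          · simp only [hβ, if_neg (not_lt.2 (le_trans ht.1 hst.le)), if_pos hst]
        · rw [heq ⟨ht.1, le_rfl⟩]
          simp
      have hL : HasDerivWithinAt β (w t) (Iic t) t := by
        have h1 : HasDerivWithinAt α (w t) (Icc a t) t := hα t ⟨ht.1, le_rfl⟩
        have h2 : Icc a t ∈ nhdsWithin t (Iic t) := by
          refine mem_nhdsWithin.2 ⟨Ioi a, isOpen_Ioi, hat, ?_⟩
          rintro s ⟨hs1, hs2⟩
          exact ⟨hs1.le, hs2⟩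
        exact ((h1.mono_of_mem_nhdsWithin h2).congr_of_eventuallyEq
          (Filter.eventuallyEq_of_mem h2 (fun s hs => heq hs))
          (heq ⟨ht.1, le_rfl⟩))
      have := hL.union hR
      rw [Iic_union_Ici] at this
      exact this.hasDerivAt (by simp)
    · -- a < t < b
      have h1 : HasDerivWithinAt α (w t) (Icc a b) t := hα t ht
      have h2 : HasDerivAt α (w t) t := h1.hasDerivAt (Icc_mem_nhds hat htb)
      exact h2.congr_of_eventuallyEq
        (Filter.eventuallyEq_of_mem (Ioo_mem_nhds hat htb)
          (fun s hs => heq (Ioo_subset_Icc_self hs)))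

lemma fb_solve (v : ℝ → E → E) (hv : Continuous fun x : ℝ × E => v x.1 x.2)
    (K : NNReal) (hl : ∀ t, LipschitzWith K (v t)) (a b : ℝ) (hab : a < b) (x₀ : E) :
    ∃ α : ℝ → E, α a = x₀ ∧ (∀ t ∈ Icc a b, HasDerivAt α (v t (α t)) t) ∧
      ContDiffOn ℝ 1 α (Icc a b) := by
  obtain ⟨α₀, h0, hd⟩ := fb_aux_exists v hv K hl a b hab.le x₀
  obtain ⟨α, heq, hda⟩ := fb_aux_ext α₀ (fun t => v t (α₀ t)) a b hab hd
  have hd' : ∀ t ∈ Icc a b, HasDerivAt α (v t (α t)) t := by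
    intro t ht
    rw [heq ht]
    exact hda t ht
  have hcont : ContinuousOn α (Icc a b) := fun t ht =>
    (hd' t ht).continuousAt.continuousWithinAt
  refine ⟨α, by rw [heq (left_mem_Icc.2 hab.le)]; exact h0, hd', ?_⟩
  have hud := uniqueDiffOn_Icc hab
  have h1 : ContDiffOn ℝ (0 + 1) α (Icc a b) := by
    rw [contDiffOn_succ_iff_derivWithin hud]
    refine ⟨fun t ht => (hd' t ht).differentiableAt.differentiableWithinAt, by simp, ?_⟩
    rw [contDiffOn_zero]
    have : ContinuousOn (fun t => v t (α t)) (Icc a b) :=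
      hv.comp_continuousOn (continuousOn_id.prodMk hcont)
    refine this.congr ?_
    intro t ht
    exact ((hd' t ht).hasDerivWithinAt.derivWithin (hud t ht))
  simpa using h1

lemma fb_adjoint_field (n : ℕ) (T : ℝ) (hT : 0 < T)
    (f : ℝ → (Fin n → ℝ) → (Fin n → ℝ)) (g : ℝ → (Fin n → ℝ) → ℝ)
    (hf1 : ∀ t, ContDiff ℝ 1 (f t))
    (hdfc : Continuous fun x : ℝ × (Fin n → ℝ) => fderiv ℝ (f x.1) x.2)
    (hdgc : Continuous fun x : ℝ × (Fin n → ℝ) => fderiv ℝ (g x.1) x.2)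
    (q : ℝ → Fin n → ℝ) (hq : ContinuousOn q (Icc 0 T)) :
    ∃ (F : ℝ → (Fin n → ℝ) → (Fin n → ℝ)) (Kp : NNReal),
      Continuous (fun z : ℝ × (Fin n → ℝ) => F z.1 z.2) ∧ (∀ t, LipschitzWith Kp (F t)) ∧
      ∀ t ∈ Icc (0:ℝ) T, ∀ x : Fin n → ℝ,
        F t x = fun i =>
          -(∑ j, x j * fderiv ℝ (fun y => f t y j) (q t) (Pi.single i 1))
            - fderiv ℝ (g t) (q t) (Pi.single i 1) := by
  classical
  set π : ℝ → ℝ := fun t => max 0 (min t T) with hπ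
  have hπc : Continuous π := continuous_const.max (continuous_id.min continuous_const)
  have hπm : ∀ t, π t ∈ Icc (0:ℝ) T := fun t =>
    ⟨le_max_left _ _, max_le hT.le (min_le_right _ _)⟩
  have hπid : ∀ t ∈ Icc (0:ℝ) T, π t = t := by
    intro t ht
    rw [hπ]
    simp only [min_eq_left ht.2, max_eq_right ht.1]
  set qc : ℝ → Fin n → ℝ := fun t => q (π t) with hqcdef
  have hqc : Continuous qc := hq.comp_continuous hπc hπm
  set A : ℝ → (Fin n → ℝ) →L[ℝ] (Fin n → ℝ) := fun t => fderiv ℝ (f (π t)) (qc t) with hAdef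
  have hA : Continuous A := hdfc.comp (hπc.prodMk hqc)
  set B : ℝ → (Fin n → ℝ) →L[ℝ] ℝ := fun t => fderiv ℝ (g (π t)) (qc t) with hBdef
  have hB : Continuous B := hdgc.comp (hπc.prodMk hqc)
  obtain ⟨CA, hCA⟩ := (isCompact_Icc (a := (0:ℝ)) (b := T)).exists_bound_of_continuousOn
    hA.continuousOn
  have hCA0 : 0 ≤ CA := le_trans (norm_nonneg _) (hCA 0 ⟨le_rfl, hT.le⟩)
  have hAb : ∀ t, ‖A t‖ ≤ CA := by
    intro t
    have h1 : A t = A (π t) := by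
      simp only [hAdef, hqcdef]
      rw [hπid (π t) (hπm t)]
    rw [h1]
    exact hCA _ (hπm t)
  refine ⟨fun t x => fun i => -(∑ j, x j * A t (Pi.single i 1) j) - B t (Pi.single i 1),
    Real.toNNReal (n * CA), ?_, ?_, ?_⟩
  · -- continuity
    apply continuous_pi
    intro i
    refine Continuous.sub (Continuous.neg (continuous_finset_sum _ fun j _ => ?_)) ?_
    · exact ((continuous_apply j).comp continuous_snd).mul
        ((continuous_apply j).comp ((hA.comp continuous_fst).clm_apply continuous_const))
    · exact (hB.comp continuous_fst).clm_apply continuous_const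
  · -- Lipschitz
    intro t
    apply LipschitzWith.of_dist_le_mul
    intro x y
    have hKp : (Real.toNNReal (n * CA) : ℝ) = n * CA :=
      Real.coe_toNNReal _ (by positivity)
    rw [hKp, dist_pi_le_iff (by positivity)]
    intro i
    set c : Fin n → ℝ := fun j => A t (Pi.single i 1) j with hc
    have hcb : ∀ j, |c j| ≤ CA := by
      intro j
      calc |c j| ≤ ‖A t (Pi.single i 1)‖ := by
            rw [← Real.norm_eq_abs]
            exact norm_le_pi_norm _ j
        _ ≤ ‖A t‖ * ‖(Pi.single i 1 : Fin n → ℝ)‖ := (A t).le_opNorm _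
        _ ≤ CA * 1 := by
            apply mul_le_mul (hAb t) _ (norm_nonneg _) hCA0
            rw [Pi.norm_single]
            simp
        _ = CA := mul_one _
    rw [Real.dist_eq]
    have e0 : ∑ j, (y j - x j) * c j = (∑ j, y j * c j) - ∑ j, x j * c j := by
      rw [← Finset.sum_sub_distrib]
      exact Finset.sum_congr rfl fun j _ => sub_mul _ _ _
    have e1 : (-(∑ j, x j * c j) - B t (Pi.single i 1))
        - (-(∑ j, y j * c j) - B t (Pi.single i 1)) = ∑ j, (y j - x j) * c j := by
      rw [e0]; ring
    rw [e1]
    calc |∑ j, (y j - x j) * c j| ≤ ∑ j, |(y j - x j) * c j| :=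
          Finset.abs_sum_le_sum_abs _ _
      _ ≤ ∑ _j : Fin n, CA * dist x y := by
          apply Finset.sum_le_sum
          intro j _
          rw [abs_mul]
          have h1 : |y j - x j| ≤ dist x y := by
            rw [abs_sub_comm, ← Real.dist_eq]
            exact dist_le_pi_dist x y j
          calc |y j - x j| * |c j| ≤ dist x y * CA :=
                mul_le_mul h1 (hcb j) (abs_nonneg _) dist_nonneg
            _ = CA * dist x y := mul_comm _ _
      _ = n * CA * dist x y := by
          rw [Finset.sum_const, Finset.card_univ, Fintype.card_fin, nsmul_eq_mul]
          ring
  · -- match on Icc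
    intro t ht x
    funext i
    have hπt : π t = t := hπid t ht
    have hqct : qc t = q t := by rw [hqcdef]; simp only [hπt]
    have hAt : A t = fderiv ℝ (f t) (q t) := by
      rw [hAdef]; simp only [hπt, hqct]
    have hBt : B t = fderiv ℝ (g t) (q t) := by
      rw [hBdef]; simp only [hπt, hqct]
    show -(∑ j, x j * A t (Pi.single i 1) j) - B t (Pi.single i 1) = _
    rw [hAt, hBt]
    congr 2
    apply Finset.sum_congr rfl
    intro j _
    congr 1
    have hdiff : DifferentiableAt ℝ (f t) (q t) := ((hf1 t).differentiable one_ne_zero) (q t)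
    have hcomp0 := (ContinuousLinearMap.proj (R := ℝ) (φ := fun _ : Fin n => ℝ)
        j).hasFDerivAt.comp (q t) hdiff.hasFDerivAt
    have hcomp : HasFDerivAt (fun y => f t y j)
        ((ContinuousLinearMap.proj j).comp (fderiv ℝ (f t) (q t))) (q t) := hcomp0
    rw [hcomp.fderiv]
    rfl


/-- `(q,p)` solves the free boundary Type II problem for the maximally degenerate
Hamiltonian `H(t,q,p) = ⟨p, f(t,q)⟩ + g(t,q)`:
`q̇ = f(t,q)`, `ṗ = -[D_q f(t,q)]ᵀ p - ∇_q g(t,q)`, `q(0) = q₀`, `p(T) = p₁(q(T))`. -/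
def IsFreeBoundarySolution (n : ℕ) (T : ℝ) (f : ℝ → (Fin n → ℝ) → (Fin n → ℝ))
    (g : ℝ → (Fin n → ℝ) → ℝ) (q₀ : Fin n → ℝ) (p₁ : (Fin n → ℝ) → (Fin n → ℝ))
    (q p : ℝ → (Fin n → ℝ)) : Prop :=
  q 0 = q₀ ∧ p T = p₁ (q T) ∧
  ∀ t ∈ Icc (0 : ℝ) T,
    HasDerivAt q (f t (q t)) t ∧
    HasDerivAt p
      (fun i => -(∑ j, p t j * fderiv ℝ (fun x => f t x j) (q t) (Pi.single i 1))
        - fderiv ℝ (g t) (q t) (Pi.single i 1)) t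

/-- With `f` C¹, `f` and `D_q f` continuous and globally Lipschitz in
the state, `g` C¹, and `p₁` continuous, the free boundary Type II problem has a unique C¹
solution on `[0,T]`. -/
theorem free_boundary_typeII_existence_uniqueness
    (n : ℕ) (T : ℝ) (hT : 0 < T) (q₀ : Fin n → ℝ)
    (f : ℝ → (Fin n → ℝ) → (Fin n → ℝ)) (g : ℝ → (Fin n → ℝ) → ℝ)
    (p₁ : (Fin n → ℝ) → (Fin n → ℝ)) (hp1 : Continuous p₁)
    (hfc : Continuous fun x : ℝ × (Fin n → ℝ) => f x.1 x.2)
    (K : NNReal) (hlip : ∀ t, LipschitzWith K (f t))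
    (hf1 : ∀ t, ContDiff ℝ 1 (f t))
    (hg1 : ∀ t, Differentiable ℝ (g t))
    (hdfc : Continuous fun x : ℝ × (Fin n → ℝ) => fderiv ℝ (f x.1) x.2)
    (hdgc : Continuous fun x : ℝ × (Fin n → ℝ) => fderiv ℝ (g x.1) x.2) :
    (∃ q p : ℝ → (Fin n → ℝ),
        ContDiffOn ℝ 1 q (Icc 0 T) ∧ ContDiffOn ℝ 1 p (Icc 0 T) ∧
        IsFreeBoundarySolution n T f g q₀ p₁ q p) ∧
    (∀ q p q' p' : ℝ → (Fin n → ℝ),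
        IsFreeBoundarySolution n T f g q₀ p₁ q p →
        IsFreeBoundarySolution n T f g q₀ p₁ q' p' →
        EqOn q q' (Icc 0 T) ∧ EqOn p p' (Icc 0 T)) := by
  constructor
  · -- existence
    obtain ⟨q, hq0, hqd, hqcd⟩ := fb_solve f hfc K hlip 0 T hT q₀
    have hqcont : ContinuousOn q (Icc 0 T) := hqcd.continuousOn
    obtain ⟨F, Kp, hFc, hFl, hFm⟩ := fb_adjoint_field n T hT f g hf1 hdfc hdgc q hqcont
    set Fr : ℝ → (Fin n → ℝ) → (Fin n → ℝ) := fun t x => -(F (T - t) x) with hFr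
    have hFrc : Continuous fun z : ℝ × (Fin n → ℝ) => Fr z.1 z.2 :=
      (hFc.comp ((continuous_const.sub continuous_fst).prodMk continuous_snd)).neg
    have hFrl : ∀ t, LipschitzWith Kp (Fr t) := by
      intro t
      apply LipschitzWith.of_dist_le_mul
      intro x y
      have h1 : dist (Fr t x) (Fr t y) = dist (F (T - t) x) (F (T - t) y) := by
        rw [hFr]
        exact dist_neg_neg _ _
      rw [h1]
      exact (hFl (T - t)).dist_le_mul x y
    obtain ⟨β, hβ0, hβd, hβcd⟩ := fb_solve Fr hFrc Kp hFrl 0 T hT (p₁ (q T))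
    set p : ℝ → Fin n → ℝ := fun t => β (T - t) with hp
    have hpT : p T = p₁ (q T) := by rw [hp]; simp only [sub_self]; exact hβ0
    have hmaps : MapsTo (fun t : ℝ => T - t) (Icc 0 T) (Icc 0 T) := by
      intro s hs
      simp only [mem_Icc] at hs ⊢
      constructor <;> linarith [hs.1, hs.2]
    have hpd : ∀ t ∈ Icc (0:ℝ) T, HasDerivAt p (F t (p t)) t := by
      intro t ht
      have h1 : HasDerivAt β (Fr (T - t) (β (T - t))) (T - t) := hβd (T - t) (hmaps ht)
      have h2 : HasDerivAt (fun s : ℝ => T - s) (-1) t := by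
        simpa using (hasDerivAt_id t).const_sub T
      have h3 := h1.scomp t h2
      have h4 : ((-1 : ℝ) • Fr (T - t) (β (T - t))) = F t (p t) := by
        rw [hFr, hp]
        simp only [sub_sub_cancel]
        rw [neg_smul, one_smul, neg_neg]
      rw [h4] at h3
      exact h3
    have hpd' : ∀ t ∈ Icc (0:ℝ) T, HasDerivAt p
        (fun i => -(∑ j, p t j * fderiv ℝ (fun x => f t x j) (q t) (Pi.single i 1))
          - fderiv ℝ (g t) (q t) (Pi.single i 1)) t := by
      intro t ht
      rw [← hFm t ht (p t)]
      exact hpd t ht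
    have hpcd : ContDiffOn ℝ 1 p (Icc 0 T) :=
      hβcd.comp ((contDiff_const.sub contDiff_id).contDiffOn) hmaps
    exact ⟨q, p, hqcd, hpcd, hq0, hpT, fun t ht => ⟨hqd t ht, hpd' t ht⟩⟩
  · -- uniqueness
    rintro q p q' p' ⟨hq0, hpT, hsol⟩ ⟨hq0', hpT', hsol'⟩
    have hqcont : ContinuousOn q (Icc 0 T) := fun t ht =>
      ((hsol t ht).1.continuousAt).continuousWithinAt
    have hq'cont : ContinuousOn q' (Icc 0 T) := fun t ht =>
      ((hsol' t ht).1.continuousAt).continuousWithinAt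
    have hpcont : ContinuousOn p (Icc 0 T) := fun t ht =>
      ((hsol t ht).2.continuousAt).continuousWithinAt
    have hp'cont : ContinuousOn p' (Icc 0 T) := fun t ht =>
      ((hsol' t ht).2.continuousAt).continuousWithinAt
    have hqq' : EqOn q q' (Icc 0 T) := by
      apply ODE_solution_unique (v := f) hlip hqcont ?_ hq'cont ?_ (by rw [hq0, hq0'])
      · intro t ht
        exact ((hsol t (Ico_subset_Icc_self ht)).1).hasDerivWithinAt
      · intro t ht
        exact ((hsol' t (Ico_subset_Icc_self ht)).1).hasDerivWithinAt
    refine ⟨hqq', ?_⟩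
    obtain ⟨F, Kp, hFc, hFl, hFm⟩ := fb_adjoint_field n T hT f g hf1 hdfc hdgc q hqcont
    have hqT : q T = q' T := hqq' (right_mem_Icc.2 hT.le)
    apply ODE_solution_unique_of_mem_Icc_left (v := F) (s := fun _ => univ)
      (fun t _ => (hFl t).lipschitzOnWith) hpcont ?_ (fun _ _ => mem_univ _)
      hp'cont ?_ (fun _ _ => mem_univ _) ?_
    · intro t ht
      have h2 := hFm t (Ioc_subset_Icc_self ht) (p t)
      rw [h2]
      exact ((hsol t (Ioc_subset_Icc_self ht)).2).hasDerivWithinAt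
    · intro t ht
      have h2 := hFm t (Ioc_subset_Icc_self ht) (p' t)
      rw [hqq' (Ioc_subset_Icc_self ht)] at h2
      rw [h2]
      exact ((hsol' t (Ioc_subset_Icc_self ht)).2).hasDerivWithinAt
    · rw [hpT, hpT', hqT]
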